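/- Let T be a finite tree with nonnegative real edge weights, rooted at r, let P be a finite multiset of vertices of T partitioned into multisets A and B, and let v be a vertex. Then the within-subtree contribution Σ_{e edge of T_v} w(e)·cross_e(A,B) equals Σ_{(a,b)∈A_v×B_v} d(a,b) + (|B| − |B_v|)·Σ_{a∈A_v} d(a,v) + (|A| − |A_v|)·Σ_{b∈B_v} d(b,v), where A_v, B_v are the restrictions of A, B to the vertices of T_v and all sums over multisets count multiplicity. -/

import Mathlib

open SimpleGraph

section TreeAux

variable {V : Type} [DecidableEq V] {G : SimpleGraph V}
variable (hT : G.IsTree) (pth : ∀ u v : V, G.Walk u v) (hpth : ∀ u v, (pth u v).IsPath)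

include hT hpth

lemma path_uniq {u v : V} (p : G.Walk u v) (hp : p.IsPath) : p = pth u v :=
  (hT.existsUnique_path u v).unique hp (hpth u v)

lemma pth_split {x y z : V} (hz : z ∈ (pth x y).support) :
    pth x y = (pth x z).append (pth z y) := by
  have h1 : (pth x y).takeUntil z hz = pth x z :=
    path_uniq hT pth hpth _ ((hpth x y).takeUntil hz)
  have h2 : (pth x y).dropUntil z hz = pth z y :=
    path_uniq hT pth hpth _ ((hpth x y).dropUntil hz)
  rw [← h1, ← h2, Walk.take_spec]

lemma pth_rev {x y : V} : pth y x = (pth x y).reverse :=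
  (path_uniq hT pth hpth _ ((hpth x y).reverse)).symm

lemma mem_support_comm {x y z : V} (h : z ∈ (pth x y).support) :
    z ∈ (pth y x).support := by
  rw [pth_rev hT pth hpth, Walk.support_reverse, List.mem_reverse]
  exact h

lemma mem_edges_comm {x y : V} {e : Sym2 V} (h : e ∈ (pth x y).edges) :
    e ∈ (pth y x).edges := by
  rw [pth_rev hT pth hpth, Walk.edges_reverse, List.mem_reverse]
  exact h

omit hT hpth in
lemma mem_support_of_mem_edges' {u w x : V} {p : G.Walk u w} {e : Sym2 V}
    (he : e ∈ p.edges) (hx : x ∈ e) : x ∈ p.support := by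
  induction e with
  | _ c d =>
    rw [Sym2.mem_iff] at hx
    rcases hx with rfl | rfl
    · exact p.fst_mem_support_of_mem_edges he
    · exact p.snd_mem_support_of_mem_edges he

variable (r v : V)

lemma memK1 {x y : V} (hx : v ∈ (pth x r).support) (hy : v ∉ (pth y r).support) :
    v ∈ (pth x y).support := by
  have hb : ((pth x y).append (pth y r)).bypass = pth x r :=
    path_uniq hT pth hpth _ (Walk.bypass_isPath _)
  rw [← hb] at hx
  have h2 := Walk.support_bypass_subset _ hx
  rw [Walk.mem_support_append_iff] at h2
  tauto

lemma mem_sub {x y z : V} (hz : z ∈ (pth x y).support) :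
    z ∈ (pth x r).support ∨ z ∈ (pth y r).support := by
  have hb : ((pth x r).append (pth y r).reverse).bypass = pth x y :=
    path_uniq hT pth hpth _ (Walk.bypass_isPath _)
  rw [← hb] at hz
  have h2 := Walk.support_bypass_subset _ hz
  rwa [Walk.mem_support_append_iff, Walk.support_reverse, List.mem_reverse] at h2

lemma notS_of_mem {x y : V} (hy : v ∉ (pth y r).support) (hx : x ∈ (pth y r).support) :
    v ∉ (pth x r).support := by
  intro hv
  apply hy
  rw [pth_split hT pth hpth hx, Walk.mem_support_append_iff]
  exact Or.inr hv

lemma memK2 {a b x : V} (ha : v ∈ (pth a r).support) (hb : v ∈ (pth b r).support)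
    (hx : x ∈ (pth a b).support) : v ∈ (pth x r).support := by
  by_contra hxS
  have h1 : v ∈ (pth a x).support := memK1 hT pth hpth r v ha hxS
  have h2 : v ∈ (pth x b).support :=
    mem_support_comm hT pth hpth (memK1 hT pth hpth r v hb hxS)
  have hsplit : (pth a b).support = (pth a x).support ++ (pth x b).support.tail := by
    rw [pth_split hT pth hpth hx, Walk.support_append]
  have hnd := (hpth a b).support_nodup
  rw [hsplit, List.nodup_append] at hnd
  have hvx : v ≠ x := by rintro rfl; exact hxS ((pth v r).start_mem_support)
  have h2t : v ∈ (pth x b).support.tail := by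
    rw [Walk.support_eq_cons, List.mem_cons] at h2
    rcases h2 with h | h
    · exact absurd h hvx
    · exact h
  exact hnd.2.2 v h1 v h2t rfl

lemma memK3 {b x : V} (hb : v ∉ (pth b r).support) (hx : x ∈ (pth v b).support)
    (hxS : v ∈ (pth x r).support) : x = v := by
  by_contra hne
  have h1 : v ∈ (pth x b).support := memK1 hT pth hpth r v hxS hb
  have hsplit : (pth v b).support = (pth v x).support ++ (pth x b).support.tail := by
    rw [pth_split hT pth hpth hx, Walk.support_append]
  have hnd := (hpth v b).support_nodup
  rw [hsplit, List.nodup_append] at hnd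
  have h2t : v ∈ (pth x b).support.tail := by
    rw [Walk.support_eq_cons, List.mem_cons] at h1
    rcases h1 with h | h
    · exact absurd h.symm hne
    · exact h
  exact hnd.2.2 v ((pth v x).start_mem_support) v h2t rfl

lemma memK4 {a b x : V} (ha : v ∉ (pth a r).support) (hb : v ∉ (pth b r).support)
    (hx : x ∈ (pth a b).support) : v ∉ (pth x r).support := by
  rcases mem_sub hT pth hpth r hx with h | h
  · exact notS_of_mem hT pth hpth r v ha h
  · exact notS_of_mem hT pth hpth r v hb h

end TreeAux

section SumAux

lemma multiset_sum_ite {α : Type*} (M : Multiset α) (p : α → Prop) [DecidablePred p] (c : ℝ) :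
    (M.map fun x => if p x then c else 0).sum = c * ((M.filter p).card : ℝ) := by
  induction M using Multiset.induction_on with
  | empty => simp
  | cons a M ih =>
    by_cases h : p a <;>
      simp [h, ih, Multiset.filter_cons_of_pos, Multiset.filter_cons_of_neg, mul_add, add_comm]

lemma swap_sum {α β : Type*} (s : Finset α) (M : Multiset β) (f : α → β → ℝ) :
    ∑ e ∈ s, (M.map (f e)).sum = (M.map fun m => ∑ e ∈ s, f e m).sum := by
  induction M using Multiset.induction_on with
  | empty => simp
  | cons a M ih => simp [Finset.sum_add_distrib, ih]

lemma sum_toFinset_nodup {α : Type*} [DecidableEq α] {l : List α} (h : l.Nodup) (f : α → ℝ) :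
    ∑ e ∈ l.toFinset, f e = (l.map f).sum := by
  induction l with
  | nil => simp
  | cons a l ih =>
    rw [List.nodup_cons] at h
    rw [List.toFinset_cons, Finset.sum_insert (by simpa using h.1), ih h.2]
    simp

lemma prod_sum_fst {α : Type*} (M N : Multiset α) (f : α → ℝ) :
    ((M ×ˢ N).map fun ab => f ab.1).sum = (N.card : ℝ) * (M.map f).sum := by
  induction M using Multiset.induction_on with
  | empty => simp
  | cons a M ih =>
    rw [Multiset.cons_product, Multiset.map_add, Multiset.sum_add, ih, Multiset.map_map]
    simp only [Function.comp, Multiset.map_cons, Multiset.sum_cons]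
    rw [Multiset.map_const', Multiset.sum_replicate]
    push_cast
    ring

lemma prod_sum_snd {α : Type*} (M N : Multiset α) (f : α → ℝ) :
    ((M ×ˢ N).map fun ab => f ab.2).sum = (M.card : ℝ) * (N.map f).sum := by
  induction M using Multiset.induction_on with
  | empty => simp
  | cons a M ih =>
    rw [Multiset.cons_product, Multiset.map_add, Multiset.sum_add, ih, Multiset.map_map]
    simp only [Function.comp, Multiset.card_cons]
    push_cast
    ring

end SumAux



open Classical in
/-- In a finite tree `G` rooted at `r` with nonnegative edge
weights `w`, for a vertex `v`, the within-subtree contribution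
`Σ_{e edge of T_v} w(e)·cross_e(A,B)` (summing over edges of `G` with both
endpoints in the subtree `T_v`) equals
`Σ_{(a,b)∈A_v×B_v} d(a,b) + (|B| − |B_v|)·Σ_{a∈A_v} d(a,v) +
(|A| − |A_v|)·Σ_{b∈B_v} d(b,v)`, where `M_v` is the restriction of `M` to the
vertices of `T_v` (those whose path to `r` passes through `v`). -/
theorem statement2
    {V : Type} [Fintype V] [DecidableEq V]
    (G : SimpleGraph V) [Fintype G.edgeSet] (hT : G.IsTree)
    (w : Sym2 V → ℝ) (hw : ∀ e, 0 ≤ w e)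
    (pth : ∀ u v : V, G.Walk u v) (hpth : ∀ u v, (pth u v).IsPath)
    (d : V → V → ℝ) (hd : ∀ u v, d u v = ((pth u v).edges.map w).sum)
    (r v : V) (P A B : Multiset V) (hP : A + B = P) :
    ∑ e ∈ G.edgeFinset.filter (fun e => ∀ x ∈ e, v ∈ (pth x r).support),
        w e * (((A ×ˢ B).filter fun ab => e ∈ (pth ab.1 ab.2).edges).card : ℝ) =
      (((A.filter fun x => v ∈ (pth x r).support) ×ˢ
          (B.filter fun x => v ∈ (pth x r).support)).map fun ab => d ab.1 ab.2).sum +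
      ((B.card : ℝ) - (B.filter fun x => v ∈ (pth x r).support).card) *
        ((A.filter fun x => v ∈ (pth x r).support).map fun a => d a v).sum +
      ((A.card : ℝ) - (A.filter fun x => v ∈ (pth x r).support).card) *
        ((B.filter fun x => v ∈ (pth x r).support).map fun b => d b v).sum := by
  classical
  set F₀ := G.edgeFinset.filter (fun e => ∀ x ∈ e, v ∈ (pth x r).support) with hF₀
  have hSv : v ∈ (pth v r).support := (pth v r).start_mem_support
  -- the per-pair edge sum
  set g : V × V → ℝ :=
    fun ab => ∑ e ∈ F₀, if e ∈ (pth ab.1 ab.2).edges then w e else 0 with hg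
  -- Step 1 : swap the two sums
  have step1 : ∑ e ∈ F₀,
      w e * (((A ×ˢ B).filter fun ab => e ∈ (pth ab.1 ab.2).edges).card : ℝ)
      = ((A ×ˢ B).map g).sum := by
    rw [hg, ← swap_sum]
    refine Finset.sum_congr rfl fun e he => ?_
    rw [multiset_sum_ite]
  -- generic evaluation of `g` as a filtered sum
  have gfilter : ∀ a b : V,
      g (a, b) = ∑ e ∈ F₀.filter (fun e => e ∈ (pth a b).edges), w e := by
    intro a b
    rw [Finset.sum_filter]
  -- membership facts for edges of paths inside the subtree
  have cond_of_edges : ∀ {a b : V}, v ∈ (pth a r).support → v ∈ (pth b r).support →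
      ∀ {e : Sym2 V}, e ∈ (pth a b).edges → e ∈ F₀ := by
    intro a b ha hb e he
    rw [hF₀, Finset.mem_filter, SimpleGraph.mem_edgeFinset]
    refine ⟨(pth a b).edges_subset_edgeSet he, fun x hx => ?_⟩
    exact memK2 hT pth hpth r v ha hb (mem_support_of_mem_edges' he hx)
  -- case 1 : both endpoints in the subtree
  have gSS : ∀ a b : V, v ∈ (pth a r).support → v ∈ (pth b r).support →
      g (a, b) = d a b := by
    intro a b ha hb
    rw [gfilter]
    have key : F₀.filter (fun e => e ∈ (pth a b).edges) = (pth a b).edges.toFinset := by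
      ext e
      simp only [Finset.mem_filter, List.mem_toFinset]
      exact ⟨fun h => h.2, fun h => ⟨cond_of_edges ha hb h, h⟩⟩
    rw [key, sum_toFinset_nodup (hpth a b).edges_nodup, hd]
  -- no admissible edge lies on a path from v to an outside vertex
  have no_out : ∀ {b : V}, v ∉ (pth b r).support → ∀ {e : Sym2 V}, e ∈ F₀ →
      e ∉ (pth v b).edges := by
    intro b hb e heF he
    rw [hF₀, Finset.mem_filter, SimpleGraph.mem_edgeFinset] at heF
    obtain ⟨heE, hcond⟩ := heF
    induction e with
    | _ x y =>
      have hx : x = v := memK3 hT pth hpth r v hb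
        (mem_support_of_mem_edges' he (by simp)) (hcond x (by simp))
      have hy : y = v := memK3 hT pth hpth r v hb
        (mem_support_of_mem_edges' he (by simp)) (hcond y (by simp))
      subst hx; subst hy
      exact G.irrefl heE
  -- case 2 : a inside, b outside
  have gS1 : ∀ a b : V, v ∈ (pth a r).support → v ∉ (pth b r).support →
      g (a, b) = d a v := by
    intro a b ha hb
    rw [gfilter]
    have hvab : v ∈ (pth a b).support := memK1 hT pth hpth r v ha hb
    have hsplit : (pth a b).edges = (pth a v).edges ++ (pth v b).edges := by
      rw [pth_split hT pth hpth hvab, Walk.edges_append]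
    have key : F₀.filter (fun e => e ∈ (pth a b).edges) = (pth a v).edges.toFinset := by
      ext e
      simp only [Finset.mem_filter, List.mem_toFinset]
      constructor
      · rintro ⟨heF, hedge⟩
        rw [hsplit, List.mem_append] at hedge
        rcases hedge with h | h
        · exact h
        · exact absurd h (no_out hb heF)
      · intro he
        refine ⟨cond_of_edges ha hSv he, ?_⟩
        rw [hsplit, List.mem_append]
        exact Or.inl he
    rw [key, sum_toFinset_nodup (hpth a v).edges_nodup, hd]
  -- case 3 : a outside, b inside
  have gS2 : ∀ a b : V, v ∉ (pth a r).support → v ∈ (pth b r).support →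
      g (a, b) = d b v := by
    intro a b ha hb
    have hswap : g (a, b) = g (b, a) := by
      rw [hg]
      refine Finset.sum_congr rfl fun e he => ?_
      congr 1
      simp only [eq_iff_iff]
      exact ⟨mem_edges_comm hT pth hpth, mem_edges_comm hT pth hpth⟩
    rw [hswap, gS1 b a hb ha]
  -- case 4 : both outside
  have g00 : ∀ a b : V, v ∉ (pth a r).support → v ∉ (pth b r).support →
      g (a, b) = 0 := by
    intro a b ha hb
    rw [gfilter]
    have key : F₀.filter (fun e => e ∈ (pth a b).edges) = ∅ := by
      rw [Finset.filter_eq_empty_iff]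
      intro e heF hedge
      rw [hF₀, Finset.mem_filter] at heF
      obtain ⟨-, hcond⟩ := heF
      induction e with
      | _ x y =>
        exact memK4 hT pth hpth r v ha hb
          (mem_support_of_mem_edges' hedge (by simp)) (hcond x (by simp))
    rw [key, Finset.sum_empty]
  -- Step 3 : assemble
  rw [step1]
  set S : V → Prop := fun x => v ∈ (pth x r).support with hSdef
  have hA : A.filter S + A.filter (fun x => ¬ S x) = A := Multiset.filter_add_not _ _
  have hB : B.filter S + B.filter (fun x => ¬ S x) = B := Multiset.filter_add_not _ _
  set A₁ := A.filter S with hA₁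
  set A₂ := A.filter (fun x => ¬ S x) with hA₂
  set B₁ := B.filter S with hB₁
  set B₂ := B.filter (fun x => ¬ S x) with hB₂
  have expand : ((A ×ˢ B).map g).sum =
      ((A₁ ×ˢ B₁).map g).sum + ((A₁ ×ˢ B₂).map g).sum +
      ((A₂ ×ˢ B₁).map g).sum + ((A₂ ×ˢ B₂).map g).sum := by
    rw [← hA, ← hB, Multiset.add_product, Multiset.product_add, Multiset.product_add,
      Multiset.map_add, Multiset.map_add, Multiset.map_add, Multiset.sum_add,
      Multiset.sum_add, Multiset.sum_add]
    ring
  have memA₁ : ∀ x ∈ A₁, S x := fun x hx => (Multiset.mem_filter.mp hx).2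
  have memA₂ : ∀ x ∈ A₂, ¬ S x := fun x hx => (Multiset.mem_filter.mp hx).2
  have memB₁ : ∀ x ∈ B₁, S x := fun x hx => (Multiset.mem_filter.mp hx).2
  have memB₂ : ∀ x ∈ B₂, ¬ S x := fun x hx => (Multiset.mem_filter.mp hx).2
  have t11 : ((A₁ ×ˢ B₁).map g).sum = ((A₁ ×ˢ B₁).map fun ab => d ab.1 ab.2).sum := by
    refine congrArg _ (Multiset.map_congr rfl fun ab hab => ?_)
    obtain ⟨hab1, hab2⟩ := Multiset.mem_product.mp hab
    have := gSS ab.1 ab.2 (memA₁ _ hab1) (memB₁ _ hab2)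
    simpa using this
  have t12 : ((A₁ ×ˢ B₂).map g).sum = (B₂.card : ℝ) * (A₁.map fun a => d a v).sum := by
    rw [← prod_sum_fst]
    refine congrArg _ (Multiset.map_congr rfl fun ab hab => ?_)
    obtain ⟨hab1, hab2⟩ := Multiset.mem_product.mp hab
    have := gS1 ab.1 ab.2 (memA₁ _ hab1) (memB₂ _ hab2)
    simpa using this
  have t21 : ((A₂ ×ˢ B₁).map g).sum = (A₂.card : ℝ) * (B₁.map fun b => d b v).sum := by
    rw [← prod_sum_snd]
    refine congrArg _ (Multiset.map_congr rfl fun ab hab => ?_)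
    obtain ⟨hab1, hab2⟩ := Multiset.mem_product.mp hab
    have := gS2 ab.1 ab.2 (memA₂ _ hab1) (memB₁ _ hab2)
    simpa using this
  have t22 : ((A₂ ×ˢ B₂).map g).sum = 0 := by
    have : ((A₂ ×ˢ B₂).map g) = (A₂ ×ˢ B₂).map (fun _ => (0 : ℝ)) := by
      refine Multiset.map_congr rfl fun ab hab => ?_
      obtain ⟨hab1, hab2⟩ := Multiset.mem_product.mp hab
      have := g00 ab.1 ab.2 (memA₂ _ hab1) (memB₂ _ hab2)
      simpa using this
    rw [this]
    simp
  have cardB : (B.card : ℝ) - (B₁.card : ℝ) = (B₂.card : ℝ) := by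
    have := congrArg Multiset.card hB
    rw [Multiset.card_add] at this
    push_cast [← this]
    ring
  have cardA : (A.card : ℝ) - (A₁.card : ℝ) = (A₂.card : ℝ) := by
    have := congrArg Multiset.card hA
    rw [Multiset.card_add] at this
    push_cast [← this]
    ring
  rw [expand, t11, t12, t21, t22, cardB, cardA]
  ring
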